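/- The weighted Coulomb expectation W_l(x₃) = ((eB₀)^{l+1}/(2^l l!)) ∫₀^∞ ρ^{2l+1} e^{−eB₀ρ²/2} (ρ²+x₃²)^{−1/2} dρ is, for each fixed x₃ ∈ ℝ, maximal at l = 0, i.e. W_0(x₃) ≥ W_l(x₃) for all l ≥ 1. -/

import Mathlib

open Real Set MeasureTheory Filter Topology

/-- The weighted Coulomb expectation
`W_l(x₃) = ((eB₀)^{l+1}/(2^l l!)) ∫₀^∞ ρ^{2l+1} e^{−eB₀ρ²/2}(ρ²+x₃²)^{−1/2} dρ`. -/
noncomputable def Wl (eB0 x3 : ℝ) (l : ℕ) : ℝ :=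
  eB0 ^ (l + 1) / (2 ^ l * Nat.factorial l) *
    ∫ ρ in Set.Ioi (0 : ℝ),
      ρ ^ (2 * l + 1) * Real.exp (-eB0 * ρ ^ 2 / 2) / Real.sqrt (ρ ^ 2 + x3 ^ 2)

namespace Stmt17Aux

variable {a c : ℝ}

/-- Gaussian-moment integrability on `(0,∞)`. -/
lemma gaussInt (ha : 0 < a) (n : ℕ) :
    IntegrableOn (fun ρ : ℝ => ρ ^ n * Real.exp (-a * ρ ^ 2 / 2)) (Ioi 0) := by
  have h := integrableOn_rpow_mul_exp_neg_mul_sq (b := a/2) (by linarith) (s := (n : ℝ))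
    (lt_of_lt_of_le (by norm_num) (Nat.cast_nonneg n))
  refine h.congr_fun (fun x hx => ?_) measurableSet_Ioi
  simp only [Real.rpow_natCast]; ring_nf

lemma sqrt_pos' (hc : 0 ≤ c) {ρ : ℝ} (hρ : 0 < ρ) : 0 < Real.sqrt (ρ ^ 2 + c) :=
  Real.sqrt_pos.2 (by positivity)

lemma le_sqrt' (hc : 0 ≤ c) {ρ : ℝ} (hρ : 0 ≤ ρ) : ρ ≤ Real.sqrt (ρ ^ 2 + c) := by
  nlinarith [Real.sq_sqrt (show (0:ℝ) ≤ ρ ^ 2 + c by positivity),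
    Real.sqrt_nonneg (ρ ^ 2 + c), sq_nonneg (ρ - Real.sqrt (ρ ^ 2 + c))]

lemma meas_f (n : ℕ) :
    Measurable (fun ρ : ℝ => ρ ^ n * Real.exp (-a * ρ ^ 2 / 2) / Real.sqrt (ρ ^ 2 + c)) := by
  fun_prop

/-- Integrability of the main integrand. -/
lemma intOn_f (ha : 0 < a) (hc : 0 ≤ c) (n : ℕ) :
    IntegrableOn (fun ρ : ℝ => ρ ^ (n + 1) * Real.exp (-a * ρ ^ 2 / 2) / Real.sqrt (ρ ^ 2 + c))
      (Ioi 0) := by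
  refine Integrable.mono' (gaussInt ha n) ((meas_f (n + 1)).aestronglyMeasurable.restrict) ?_
  filter_upwards [ae_restrict_mem measurableSet_Ioi] with ρ hρ
  have hρ0 : (0:ℝ) < ρ := hρ
  have hw := sqrt_pos' hc hρ0
  have hle := le_sqrt' hc hρ0.le
  rw [Real.norm_eq_abs, abs_of_nonneg (by positivity)]
  rw [div_le_iff₀ hw, pow_succ]
  have h1 : (0:ℝ) ≤ ρ ^ n * Real.exp (-a * ρ ^ 2 / 2) := by positivity
  calc ρ ^ n * ρ * Real.exp (-a * ρ ^ 2 / 2)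
      = (ρ ^ n * Real.exp (-a * ρ ^ 2 / 2)) * ρ := by ring
    _ ≤ (ρ ^ n * Real.exp (-a * ρ ^ 2 / 2)) * Real.sqrt (ρ ^ 2 + c) :=
        mul_le_mul_of_nonneg_left hle h1

/-- Integrability of the "derivative of the Coulomb factor" part. -/
lemma intOn_phi (ha : 0 < a) (hc : 0 ≤ c) (m : ℕ) :
    IntegrableOn
      (fun ρ : ℝ => ρ ^ (2 * m + 3) * Real.exp (-a * ρ ^ 2 / 2) / Real.sqrt (ρ ^ 2 + c) ^ 3)
      (Ioi 0) := by
  have hmeas : Measurable (fun ρ : ℝ =>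
      ρ ^ (2 * m + 3) * Real.exp (-a * ρ ^ 2 / 2) / Real.sqrt (ρ ^ 2 + c) ^ 3) := by fun_prop
  refine Integrable.mono' (gaussInt ha (2 * m)) hmeas.aestronglyMeasurable.restrict ?_
  filter_upwards [ae_restrict_mem measurableSet_Ioi] with ρ hρ
  have hρ0 : (0:ℝ) < ρ := hρ
  have hw := sqrt_pos' hc hρ0
  have hle := le_sqrt' hc hρ0.le
  rw [Real.norm_eq_abs, abs_of_nonneg (by positivity)]
  rw [div_le_iff₀ (by positivity)]
  have h3 : ρ ^ 3 ≤ Real.sqrt (ρ ^ 2 + c) ^ 3 := pow_le_pow_left₀ hρ0.le hle 3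
  calc ρ ^ (2 * m + 3) * Real.exp (-a * ρ ^ 2 / 2)
      = (ρ ^ (2 * m) * Real.exp (-a * ρ ^ 2 / 2)) * ρ ^ 3 := by ring
    _ ≤ (ρ ^ (2 * m) * Real.exp (-a * ρ ^ 2 / 2)) * Real.sqrt (ρ ^ 2 + c) ^ 3 :=
        mul_le_mul_of_nonneg_left h3 (by positivity)

/-- `x^k e^{-a x²/2} → 0` at `+∞`. -/
lemma tendsto_pow_gauss (ha : 0 < a) (k : ℕ) :
    Tendsto (fun ρ : ℝ => ρ ^ k * Real.exp (-a * ρ ^ 2 / 2)) atTop (𝓝 0) := by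
  have hb : (0:ℝ) < a / 2 := by linarith
  have h1 : Tendsto (fun ρ : ℝ => (a / 2) * ρ) atTop atTop :=
    (tendsto_id.const_mul_atTop hb)
  have h2 := (tendsto_pow_mul_exp_neg_atTop_nhds_zero k).comp h1
  have h3 : Tendsto (fun ρ : ℝ => (a/2)⁻¹ ^ k * (((a/2) * ρ) ^ k * Real.exp (-((a/2) * ρ))))
      atTop (𝓝 0) := by
    simpa using h2.const_mul ((a/2)⁻¹ ^ k)
  have key : Tendsto (fun ρ : ℝ => ρ ^ k * Real.exp (-(a/2) * ρ)) atTop (𝓝 0) := by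
    refine h3.congr (fun ρ => ?_)
    have h4 : (a/2)⁻¹ ^ k * (a/2 * ρ) ^ k = ρ ^ k := by
      rw [← mul_pow, ← mul_assoc, inv_mul_cancel₀ hb.ne', one_mul]
    rw [show -(a/2 * ρ) = -(a/2) * ρ by ring, ← mul_assoc, h4]
  -- squeeze: for ρ ≥ 1, exp(-aρ²/2) ≤ exp(-(a/2)ρ)
  refine squeeze_zero' ?_ ?_ key
  · filter_upwards [eventually_ge_atTop (1:ℝ)] with ρ hρ
    positivity
  · filter_upwards [eventually_ge_atTop (1:ℝ)] with ρ hρ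
    have h5 : ρ ≤ ρ ^ 2 := by nlinarith
    have h6 : a * ρ ≤ a * ρ ^ 2 := mul_le_mul_of_nonneg_left h5 ha.le
    have : -a * ρ ^ 2 / 2 ≤ -(a/2) * ρ := by linarith
    exact mul_le_mul_of_nonneg_left (Real.exp_le_exp.2 this) (by positivity)

/-- The key integration-by-parts inequality:
`a ∫ ρ^{2m+3} e g ≤ (2m+2) ∫ ρ^{2m+1} e g`. -/
lemma key (ha : 0 < a) (hc : 0 ≤ c) (m : ℕ) :
    a * ∫ ρ in Ioi (0:ℝ), ρ ^ (2 * m + 3) * Real.exp (-a * ρ ^ 2 / 2) / Real.sqrt (ρ ^ 2 + c)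
      ≤ (2 * m + 2) *
        ∫ ρ in Ioi (0:ℝ), ρ ^ (2 * m + 1) * Real.exp (-a * ρ ^ 2 / 2) / Real.sqrt (ρ ^ 2 + c) := by
  set w : ℝ → ℝ := fun ρ => Real.sqrt (ρ ^ 2 + c) with hw_def
  set G : ℝ → ℝ := fun ρ => ρ ^ (2 * m + 2) * Real.exp (-a * ρ ^ 2 / 2) / w ρ with hG_def
  set G' : ℝ → ℝ := fun ρ =>
      ((2 * m + 2) * ρ ^ (2 * m + 1) - a * ρ ^ (2 * m + 3)) * Real.exp (-a * ρ ^ 2 / 2) / w ρ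
      - ρ ^ (2 * m + 3) * Real.exp (-a * ρ ^ 2 / 2) / w ρ ^ 3 with hG'_def
  have hderiv : ∀ ρ ∈ Ioi (0:ℝ), HasDerivAt G (G' ρ) ρ := by
    intro ρ hρ
    have hρ0 : (0:ℝ) < ρ := hρ
    have hwpos : 0 < w ρ := sqrt_pos' hc hρ0
    have hwne : w ρ ≠ 0 := hwpos.ne'
    have hsum : (0:ℝ) < ρ ^ 2 + c := by positivity
    -- derivative of the exponential
    have hexp : HasDerivAt (fun ρ : ℝ => Real.exp (-a * ρ ^ 2 / 2))
        (-a * ρ * Real.exp (-a * ρ ^ 2 / 2)) ρ := by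
      have h1 : HasDerivAt (fun ρ : ℝ => -a * ρ ^ 2 / 2) (-a * ρ) ρ := by
        have := ((hasDerivAt_pow 2 ρ).const_mul (-a)).div_const 2
        simpa using this.congr_deriv (by ring)
      simpa [mul_comm] using h1.exp
    have hu : HasDerivAt (fun ρ : ℝ => ρ ^ (2 * m + 2) * Real.exp (-a * ρ ^ 2 / 2))
        (((2 * m + 2) * ρ ^ (2 * m + 1) - a * ρ ^ (2 * m + 3)) * Real.exp (-a * ρ ^ 2 / 2)) ρ := by
      have := (hasDerivAt_pow (2 * m + 2) ρ).mul hexp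
      refine this.congr_deriv ?_
      push_cast
      ring
    have hw' : HasDerivAt w (ρ / w ρ) ρ := by
      have h1 : HasDerivAt (fun ρ : ℝ => ρ ^ 2 + c) (2 * ρ) ρ := by
        simpa using (hasDerivAt_pow 2 ρ).add_const c
      have := h1.sqrt hsum.ne'
      simpa [hw_def] using this.congr_deriv (by field_simp)
    have hG : HasDerivAt G
        ((((2 * m + 2) * ρ ^ (2 * m + 1) - a * ρ ^ (2 * m + 3)) * Real.exp (-a * ρ ^ 2 / 2) * w ρ
          - ρ ^ (2 * m + 2) * Real.exp (-a * ρ ^ 2 / 2) * (ρ / w ρ)) / w ρ ^ 2) ρ :=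
      hu.div hw' hwne
    refine hG.congr_deriv ?_
    rw [hG'_def]
    field_simp
    ring
  -- G is continuous at 0 from the right
  have hcont : ContinuousWithinAt G (Ici (0:ℝ)) 0 := by
    have hG0 : G 0 = 0 := by simp [hG_def]
    rw [ContinuousWithinAt, hG0]
    refine squeeze_zero' (g := fun ρ => ρ ^ (2 * m + 1)) ?_ ?_ ?_
    · filter_upwards [self_mem_nhdsWithin] with ρ (hρ : (0:ℝ) ≤ ρ)
      rcases eq_or_lt_of_le hρ with rfl | hρ0
      · simp [hG_def]
      · have := sqrt_pos' hc hρ0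
        rw [hG_def]; positivity
    · filter_upwards [self_mem_nhdsWithin] with ρ (hρ : (0:ℝ) ≤ ρ)
      rcases eq_or_lt_of_le hρ with rfl | hρ0
      · simp [hG_def]
      · have hwpos := sqrt_pos' hc hρ0
        have hle := le_sqrt' hc hρ0.le
        rw [hG_def]
        have hexple : Real.exp (-a * ρ ^ 2 / 2) ≤ 1 := by
          rw [← Real.exp_zero]
          exact Real.exp_le_exp.2 (by nlinarith)
        rw [div_le_iff₀ hwpos]
        calc ρ ^ (2 * m + 2) * Real.exp (-a * ρ ^ 2 / 2)
            ≤ ρ ^ (2 * m + 2) * 1 := by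
              exact mul_le_mul_of_nonneg_left hexple (by positivity)
          _ = ρ ^ (2 * m + 1) * ρ := by ring
          _ ≤ ρ ^ (2 * m + 1) * Real.sqrt (ρ ^ 2 + c) :=
              mul_le_mul_of_nonneg_left hle (by positivity)
    · have : Tendsto (fun ρ : ℝ => ρ ^ (2 * m + 1)) (𝓝[Ici 0] 0) (𝓝 0) := by
        refine tendsto_nhdsWithin_of_tendsto_nhds ?_
        have := (continuous_pow (2 * m + 1)).tendsto (0:ℝ)
        simpa using this
      exact this
  -- G tends to 0 at infinity
  have htop : Tendsto G atTop (𝓝 0) := by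
    refine squeeze_zero' ?_ ?_ (tendsto_pow_gauss ha (2 * m + 1))
    · filter_upwards [eventually_gt_atTop (0:ℝ)] with ρ hρ0
      have := sqrt_pos' hc hρ0
      rw [hG_def]; positivity
    · filter_upwards [eventually_gt_atTop (0:ℝ)] with ρ hρ0
      have hwpos := sqrt_pos' hc hρ0
      have hle := le_sqrt' hc hρ0.le
      rw [hG_def, div_le_iff₀ hwpos]
      calc ρ ^ (2 * m + 2) * Real.exp (-a * ρ ^ 2 / 2)
          = (ρ ^ (2 * m + 1) * Real.exp (-a * ρ ^ 2 / 2)) * ρ := by ring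
        _ ≤ (ρ ^ (2 * m + 1) * Real.exp (-a * ρ ^ 2 / 2)) * Real.sqrt (ρ ^ 2 + c) :=
            mul_le_mul_of_nonneg_left hle (by positivity)
  -- integrability pieces
  have hint1 := intOn_f ha hc (2 * m) (a := a) (c := c)
  have hint3 := intOn_f ha hc (2 * m + 2) (a := a) (c := c)
  have hintphi := intOn_phi ha hc m (a := a) (c := c)
  have h2m1 : 2 * m + 1 = 2 * m + 0 + 1 := by ring
  have h2m3 : 2 * m + 3 = 2 * m + 2 + 1 := by ring
  have hf1 : IntegrableOn
      (fun ρ : ℝ => ρ ^ (2 * m + 1) * Real.exp (-a * ρ ^ 2 / 2) / Real.sqrt (ρ ^ 2 + c))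
      (Ioi 0) := by rw [h2m1]; simpa using hint1
  have hf3 : IntegrableOn
      (fun ρ : ℝ => ρ ^ (2 * m + 3) * Real.exp (-a * ρ ^ 2 / 2) / Real.sqrt (ρ ^ 2 + c))
      (Ioi 0) := by rw [h2m3]; exact hint3
  have hA : IntegrableOn (fun ρ : ℝ =>
      ((2 * m + 2) * ρ ^ (2 * m + 1) - a * ρ ^ (2 * m + 3)) * Real.exp (-a * ρ ^ 2 / 2) / w ρ)
      (Ioi 0) := by
    have h := ((hf1.const_mul ((2 * m : ℝ) + 2)).sub (hf3.const_mul a))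
    refine IntegrableOn.congr_fun h (fun ρ _ => ?_) measurableSet_Ioi
    simp only [Pi.sub_apply]
    rw [hw_def]
    push_cast
    ring
  have hG'int : IntegrableOn G' (Ioi 0) := hA.sub hintphi
  -- FTC: the integral of G' vanishes
  have hFTC : ∫ ρ in Ioi (0:ℝ), G' ρ = 0 := by
    rw [MeasureTheory.integral_Ioi_of_hasDerivAt_of_tendsto hcont hderiv hG'int htop]
    simp [hG_def]
  -- ∫ φ ≥ 0
  have hphi_nonneg : 0 ≤ ∫ ρ in Ioi (0:ℝ),
      ρ ^ (2 * m + 3) * Real.exp (-a * ρ ^ 2 / 2) / w ρ ^ 3 := by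
    refine setIntegral_nonneg measurableSet_Ioi (fun ρ hρ => ?_)
    have hρ0 : (0:ℝ) < ρ := hρ
    have := sqrt_pos' hc hρ0
    rw [hw_def]
    positivity
  -- conclude
  have hsplit : ∫ ρ in Ioi (0:ℝ), G' ρ
      = (∫ ρ in Ioi (0:ℝ),
          ((2 * m + 2) * ρ ^ (2 * m + 1) - a * ρ ^ (2 * m + 3)) * Real.exp (-a * ρ ^ 2 / 2) / w ρ)
        - ∫ ρ in Ioi (0:ℝ), ρ ^ (2 * m + 3) * Real.exp (-a * ρ ^ 2 / 2) / w ρ ^ 3 :=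
    MeasureTheory.integral_sub hA hintphi
  have hAval : ∫ ρ in Ioi (0:ℝ),
        ((2 * m + 2) * ρ ^ (2 * m + 1) - a * ρ ^ (2 * m + 3)) * Real.exp (-a * ρ ^ 2 / 2) / w ρ
      = (2 * m + 2) *
          (∫ ρ in Ioi (0:ℝ), ρ ^ (2 * m + 1) * Real.exp (-a * ρ ^ 2 / 2) / w ρ)
        - a * ∫ ρ in Ioi (0:ℝ), ρ ^ (2 * m + 3) * Real.exp (-a * ρ ^ 2 / 2) / w ρ := by
    rw [← MeasureTheory.integral_const_mul, ← MeasureTheory.integral_const_mul,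
      ← MeasureTheory.integral_sub (hf1.const_mul _) (hf3.const_mul _)]
    refine setIntegral_congr_fun measurableSet_Ioi (fun ρ _ => ?_)
    rw [hw_def]
    push_cast
    ring
  rw [hsplit, hAval] at hFTC
  rw [hw_def] at hFTC
  simp only [hw_def] at hphi_nonneg
  linarith

end Stmt17Aux

open Stmt17Aux in
/-- `W_l(x₃)` is maximal at `l = 0`:  `W_l(x₃) ≤ W_0(x₃)` for all `l ≥ 1`. -/
theorem stmt17 (eB0 x3 : ℝ) (heB0 : 0 < eB0) :
    ∀ l : ℕ, 1 ≤ l → Wl eB0 x3 l ≤ Wl eB0 x3 0 := by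
  have hc : (0:ℝ) ≤ x3 ^ 2 := sq_nonneg x3
  -- step inequality
  have step : ∀ m : ℕ, Wl eB0 x3 (m + 1) ≤ Wl eB0 x3 m := by
    intro m
    have hkey := key heB0 hc m (c := x3 ^ 2)
    unfold Wl
    set J1 := ∫ ρ in Set.Ioi (0:ℝ),
      ρ ^ (2 * m + 1) * Real.exp (-eB0 * ρ ^ 2 / 2) / Real.sqrt (ρ ^ 2 + x3 ^ 2) with hJ1
    set J3 := ∫ ρ in Set.Ioi (0:ℝ),
      ρ ^ (2 * (m + 1) + 1) * Real.exp (-eB0 * ρ ^ 2 / 2) / Real.sqrt (ρ ^ 2 + x3 ^ 2) with hJ3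
    have hJ3' : J3 = ∫ ρ in Set.Ioi (0:ℝ),
        ρ ^ (2 * m + 3) * Real.exp (-eB0 * ρ ^ 2 / 2) / Real.sqrt (ρ ^ 2 + x3 ^ 2) := by
      rw [hJ3]; simp only [show 2 * (m + 1) + 1 = 2 * m + 3 from by ring]
    rw [← hJ3'] at hkey
    -- now: eB0 * J3 ≤ (2m+2) * J1; want
    -- eB0^(m+2)/(2^(m+1)*(m+1)!) * J3 ≤ eB0^(m+1)/(2^m * m!) * J1
    have hpos : (0:ℝ) < eB0 ^ (m + 1) / (2 ^ (m + 1) * Nat.factorial (m + 1)) := by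
      have := Nat.factorial_pos (m + 1)
      positivity
    have := mul_le_mul_of_nonneg_left hkey hpos.le
    have hfact : (Nat.factorial (m + 1) : ℝ) = (m + 1) * Nat.factorial m := by
      push_cast [Nat.factorial_succ]; ring
    have hfpos : (0:ℝ) < Nat.factorial m := by exact_mod_cast Nat.factorial_pos m
    calc eB0 ^ (m + 1 + 1) / (2 ^ (m + 1) * Nat.factorial (m + 1)) * J3
        = eB0 ^ (m + 1) / (2 ^ (m + 1) * Nat.factorial (m + 1)) * (eB0 * J3) := by ring
      _ ≤ eB0 ^ (m + 1) / (2 ^ (m + 1) * Nat.factorial (m + 1)) * ((2 * m + 2) * J1) := this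
      _ = eB0 ^ (m + 1) / (2 ^ m * Nat.factorial m) * J1 := by
          rw [hfact]
          field_simp
          ring
  intro l _
  clear heB0
  induction l with
  | zero => exact le_refl _
  | succ n ih =>
    rcases Nat.eq_zero_or_pos n with rfl | hn
    · simpa using step 0
    · exact (step n).trans (ih hn)
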